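/- arXiv:2307.02315 — 6 statements merged into one kernel-verified Lean document; each statement's English description precedes it below -/
import Mathlib

section
/- Let K be a field with valuation v, μ a valuation on K[x] extending v, and f, q ∈ K[x] with deg(q) ≥ 1 and a ∈ K nonzero. If f = f_0 + f_1 q + ... + f_n q^n is the q-expansion of f (with deg(f_i) < deg(q)), then f = f_0 + (f_1/a)(aq) + ... + (f_n/a^n)(aq)^n is the aq-expansion of f. Consequently, if μ_q(f) = μ(f) then μ_{aq}(f) = μ(f), where μ_q(f) := min_i μ(f_i q^i). -/
open Polynomial

/-!
STATEMENT 0: if `f = Σ cᵢ qⁱ` is the `q`-expansion of `f` and `a ≠ 0`, then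
`f = Σ (cᵢ/aⁱ)(aq)ⁱ` is the `aq`-expansion of `f`; consequently, if
`μ_q(f) = μ(f)` then `μ_{aq}(f) = μ(f)`.
-/
theorem qExpansion_scale {K Γ : Type*} [Field K] [AddCommGroup Γ] [LinearOrder Γ] [IsOrderedAddMonoid Γ]
    (μ : Polynomial K → WithTop Γ)
    (hmul : ∀ f g : Polynomial K, μ (f * g) = μ f + μ g)
    (f q : Polynomial K) (hq : 1 ≤ q.degree)
    (n : ℕ) (c : ℕ → Polynomial K)
    (hdeg : ∀ i, (c i).degree < q.degree)
    (hexp : f = ∑ i ∈ Finset.range (n + 1), c i * q ^ i)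
    (a : K) (ha : a ≠ 0) :
    (f = ∑ i ∈ Finset.range (n + 1),
        (Polynomial.C (a⁻¹ ^ i) * c i) * (Polynomial.C a * q) ^ i) ∧
    (∀ i, (Polynomial.C (a⁻¹ ^ i) * c i).degree < (Polynomial.C a * q).degree) ∧
    ((Finset.range (n + 1)).inf' Finset.nonempty_range_add_one
        (fun i => μ (c i * q ^ i)) = μ f →
      (Finset.range (n + 1)).inf' Finset.nonempty_range_add_one
        (fun i => μ ((Polynomial.C (a⁻¹ ^ i) * c i) * (Polynomial.C a * q) ^ i))
        = μ f) := by
  have key : ∀ i, (Polynomial.C (a⁻¹ ^ i) * c i) * (Polynomial.C a * q) ^ i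
      = c i * q ^ i := by
    intro i
    rw [mul_pow, ← C_pow]
    have : (C (a⁻¹ ^ i) * C (a ^ i) : Polynomial K) = 1 := by
      rw [← C_mul, inv_pow, inv_mul_cancel₀ (pow_ne_zero i ha), C_1]
    calc C (a⁻¹ ^ i) * c i * (C (a ^ i) * q ^ i)
        = (C (a⁻¹ ^ i) * C (a ^ i)) * (c i * q ^ i) := by ring
      _ = c i * q ^ i := by rw [this, one_mul]
  refine ⟨by simpa only [key] using hexp, fun i => ?_, fun h => by simpa only [key] using h⟩
  · calc (Polynomial.C (a⁻¹ ^ i) * c i).degree ≤ (c i).degree := by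
          rcases eq_or_ne (a⁻¹ ^ i) 0 with h0 | h0
          · simp [h0]
          · rw [degree_C_mul h0]
      _ < q.degree := hdeg i
      _ = (Polynomial.C a * q).degree := by rw [degree_C_mul ha]
end

section
/- Let μ be a valuation on K[x] extending a valuation v on K, and let Q ⊆ K[x] be a complete set for μ such that μ(q) = 0 for every q ∈ Q. Then for every f ∈ K[x] with μ(f) ≥ 0 there exist finitely many multi-indices λ_1, ..., λ_s ∈ ℕ^Q and elements a_1, ..., a_s in the valuation ring O_K of K such that f = Σ_{i=1}^s a_i Q^{λ_i} and μ(f) = min_i v(a_i), where Q^{λ} denotes the finite product ∏_{q∈Q} q^{λ(q)}. -/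
open Polynomial

/-- An additive valuation on a field with values in `WithTop Γ`. -/
structure AddVal (L : Type*) [Field L] (Γ : Type*) [AddCommGroup Γ] [LinearOrder Γ] [IsOrderedAddMonoid Γ] where
  v : L → WithTop Γ
  map_mul : ∀ x y : L, v (x * y) = v x + v y
  map_add : ∀ x y : L, min (v x) (v y) ≤ v (x + y)
  map_one : v 1 = 0
  map_neg : ∀ x : L, v (-x) = v x
  top_iff : ∀ x : L, v x = ⊤ ↔ x = 0

variable {K L Γ : Type*} [Field K] [Field L] [AddCommGroup Γ] [LinearOrder Γ] [IsOrderedAddMonoid Γ]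

/-- The valuation ring of an additive valuation. -/
def AddVal.ring (w : AddVal L Γ) : Subring L where
  carrier := {x | 0 ≤ w.v x}
  mul_mem' := by
    intro a b ha hb
    simp only [Set.mem_setOf_eq] at *
    rw [w.map_mul]; exact add_nonneg ha hb
  one_mem' := by simp only [Set.mem_setOf_eq, w.map_one, le_refl]
  add_mem' := by
    intro a b ha hb
    simp only [Set.mem_setOf_eq] at *
    exact le_trans (le_min ha hb) (w.map_add a b)
  zero_mem' := by
    simp only [Set.mem_setOf_eq, (w.top_iff 0).mpr rfl, le_top]
  neg_mem' := by
    intro a ha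
    simp only [Set.mem_setOf_eq] at *
    rwa [w.map_neg]

/-- Pullback of an additive valuation along a ring homomorphism of fields. -/
def AddVal.comap (w : AddVal L Γ) (f : K →+* L) : AddVal K Γ where
  v c := w.v (f c)
  map_mul x y := by rw [_root_.map_mul, w.map_mul]
  map_add x y := by simpa using w.map_add (f x) (f y)
  map_one := by simpa using w.map_one
  map_neg x := by simpa using w.map_neg (f x)
  top_iff x := by rw [w.top_iff, _root_.map_eq_zero]

/-- `γ` is the truncation `μ_q(f)` of `μ` at `q`, computed from the `q`-expansion of `f`. -/
def IsTrunc (μ : Polynomial K → WithTop Γ) (q f : Polynomial K) (γ : WithTop Γ) : Prop :=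
  ∃ (n : ℕ) (c : ℕ → Polynomial K), (∀ m, (c m).degree < q.degree) ∧
    (f = ∑ m ∈ Finset.range (n + 1), c m * q ^ m) ∧
    γ = (Finset.range (n + 1)).inf' Finset.nonempty_range_add_one
      (fun m => μ (c m * q ^ m))

/-- A complete set of polynomials for `μ`. -/
def CompleteSet (μ : Polynomial K → WithTop Γ) (S : Set (Polynomial K)) : Prop :=
  (∀ q ∈ S, 1 ≤ q.degree) ∧
  ∀ f : Polynomial K, 1 ≤ f.degree →
    ∃ q ∈ S, q.degree ≤ f.degree ∧ IsTrunc μ q f (μ f)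

/-- Two sets of polynomials are `K`-proportional. -/
def KProportional (S S' : Set (Polynomial K)) : Prop :=
  ∃ φ : Polynomial K → Polynomial K, Set.BijOn φ S S' ∧
    ∀ q ∈ S, ∃ a : K, a ≠ 0 ∧ φ q = Polynomial.C a * q


section RepAux

variable {K Γ : Type*} [Field K] [AddCommGroup Γ] [LinearOrder Γ] [IsOrderedAddMonoid Γ]

/-- Auxiliary predicate: `f` has a representation as an `𝒪_K`-combination of
`S`-monomials with minimum coefficient valuation `γ`. -/
def MuRep (μ : Polynomial K → WithTop Γ) (S : Set (Polynomial K))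
    (f : Polynomial K) (γ : WithTop Γ) : Prop :=
  ∃ (s : ℕ) (a : Fin (s + 1) → K) (lam : Fin (s + 1) → (Polynomial K →₀ ℕ)),
    (∀ j, ↑(lam j).support ⊆ S) ∧
    (∀ j, 0 ≤ μ (Polynomial.C (a j))) ∧
    f = ∑ j : Fin (s + 1),
          Polynomial.C (a j) * (lam j).prod (fun q k => q ^ k) ∧
    γ = Finset.univ.inf' Finset.univ_nonempty
          (fun j : Fin (s + 1) => μ (Polynomial.C (a j)))

lemma muRep_C (μ : Polynomial K → WithTop Γ) (S : Set (Polynomial K)) (a : K)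
    (ha : 0 ≤ μ (Polynomial.C a)) : MuRep μ S (Polynomial.C a) (μ (Polynomial.C a)) := by
  refine ⟨0, fun _ => a, fun _ => 0, ?_, fun _ => ha, ?_, ?_⟩
  · intro j; simp
  · simp [Finsupp.prod_zero_index]
  · simp

lemma muRep_add (μ : Polynomial K → WithTop Γ) (S : Set (Polynomial K))
    {f g : Polynomial K} {γ δ : WithTop Γ}
    (hf : MuRep μ S f γ) (hg : MuRep μ S g δ) : MuRep μ S (f + g) (min γ δ) := by
  obtain ⟨s1, a1, lam1, hsupp1, hpos1, hsum1, hmin1⟩ := hf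
  obtain ⟨s2, a2, lam2, hsupp2, hpos2, hsum2, hmin2⟩ := hg
  set A : Fin ((s1 + 1) + (s2 + 1)) → K := Fin.append a1 a2 with hA
  set L : Fin ((s1 + 1) + (s2 + 1)) → (Polynomial K →₀ ℕ) := Fin.append lam1 lam2 with hL
  refine ⟨s1 + 1 + s2, A, L, ?_, ?_, ?_, ?_⟩
  · refine Fin.addCases (m := s1 + 1) (n := s2 + 1) (fun i => ?_) (fun i => ?_)
    · simp only [hL, Fin.append_left]; exact hsupp1 i
    · simp only [hL, Fin.append_right]; exact hsupp2 i
  · refine Fin.addCases (m := s1 + 1) (n := s2 + 1) (fun i => ?_) (fun i => ?_)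
    · simp only [hA, Fin.append_left]; exact hpos1 i
    · simp only [hA, Fin.append_right]; exact hpos2 i
  · show f + g = ∑ j : Fin ((s1 + 1) + (s2 + 1)),
        Polynomial.C (A j) * (L j).prod (fun q k => q ^ k)
    rw [Fin.sum_univ_add]
    simp only [hA, hL, Fin.append_left, Fin.append_right]
    rw [hsum1, hsum2]
  · haveI : Nonempty (Fin ((s1 + 1) + (s2 + 1))) := ⟨⟨0, by omega⟩⟩
    show min γ δ = (Finset.univ : Finset (Fin ((s1 + 1) + (s2 + 1)))).inf'
        Finset.univ_nonempty (fun j => μ (Polynomial.C (A j)))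
    rw [hmin1, hmin2]
    apply le_antisymm
    · apply Finset.le_inf'
      refine Fin.addCases (m := s1 + 1) (n := s2 + 1) (fun i _ => ?_) (fun i _ => ?_)
      · simp only [hA, Fin.append_left]
        exact le_trans (min_le_left _ _) (Finset.inf'_le _ (Finset.mem_univ i))
      · simp only [hA, Fin.append_right]
        exact le_trans (min_le_right _ _) (Finset.inf'_le _ (Finset.mem_univ i))
    · apply le_min
      · apply Finset.le_inf'
        intro i _
        have e : μ (Polynomial.C (A (Fin.castAdd (s2 + 1) i)))
            = μ (Polynomial.C (a1 i)) := by rw [hA, Fin.append_left]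
        calc _ ≤ μ (Polynomial.C (A (Fin.castAdd (s2 + 1) i))) :=
              Finset.inf'_le (fun j => μ (Polynomial.C (A j))) (Finset.mem_univ _)
          _ = _ := e
      · apply Finset.le_inf'
        intro i _
        have e : μ (Polynomial.C (A (Fin.natAdd (s1 + 1) i)))
            = μ (Polynomial.C (a2 i)) := by rw [hA, Fin.append_right]
        calc _ ≤ μ (Polynomial.C (A (Fin.natAdd (s1 + 1) i))) :=
              Finset.inf'_le (fun j => μ (Polynomial.C (A j))) (Finset.mem_univ _)
          _ = _ := e

lemma muRep_mul_pow (μ : Polynomial K → WithTop Γ) (S : Set (Polynomial K))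
    {f : Polynomial K} {γ : WithTop Γ} (hf : MuRep μ S f γ)
    {q : Polynomial K} (hq : q ∈ S) (m : ℕ) : MuRep μ S (f * q ^ m) γ := by
  obtain ⟨s, a, lam, hsupp, hpos, hsum, hmin⟩ := hf
  refine ⟨s, a, fun j => lam j + Finsupp.single q m, ?_, hpos, ?_, hmin⟩
  · intro j x hx
    simp only [Finset.mem_coe, Finsupp.mem_support_iff, Finsupp.add_apply] at hx
    by_cases h1 : lam j x = 0
    · rw [h1, zero_add] at hx
      have hxq : x = q := by
        by_contra hne
        exact hx (Finsupp.single_eq_of_ne hne)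
      rw [hxq]; exact hq
    · exact hsupp j (Finsupp.mem_support_iff.mpr h1)
  · rw [hsum, Finset.sum_mul]
    apply Finset.sum_congr rfl
    intro j _
    rw [Finsupp.prod_add_index' (fun _ => pow_zero _) (fun _ _ _ => pow_add _ _ _)]
    rw [Finsupp.prod_single_index (pow_zero q)]
    ring

lemma muRep_sum (μ : Polynomial K → WithTop Γ) (S : Set (Polynomial K))
    (n : ℕ) (c : ℕ → Polynomial K) (γ : ℕ → WithTop Γ)
    (h : ∀ m, m < n + 1 → MuRep μ S (c m) (γ m)) :
    MuRep μ S (∑ m ∈ Finset.range (n + 1), c m)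
      ((Finset.range (n + 1)).inf' Finset.nonempty_range_add_one γ) := by
  induction n with
  | zero => simpa using h 0 (by omega)
  | succ n ih =>
    have e1 : ∑ m ∈ Finset.range (n + 1 + 1), c m
        = (∑ m ∈ Finset.range (n + 1), c m) + c (n + 1) := Finset.sum_range_succ _ _
    have e2 : (Finset.range (n + 1 + 1)).inf' Finset.nonempty_range_add_one γ
        = min ((Finset.range (n + 1)).inf' Finset.nonempty_range_add_one γ) (γ (n + 1)) := by
      apply le_antisymm
      · apply le_min
        · exact Finset.le_inf' _ _ (fun i hi => Finset.inf'_le _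
            (Finset.mem_range.mpr (by have := Finset.mem_range.mp hi; omega)))
        · exact Finset.inf'_le _ (Finset.mem_range.mpr (by omega))
      · apply Finset.le_inf'
        intro i hi
        have hi' := Finset.mem_range.mp hi
        rcases Nat.lt_or_ge i (n + 1) with h | h
        · exact le_trans (min_le_left _ _) (Finset.inf'_le _ (Finset.mem_range.mpr h))
        · have : i = n + 1 := by omega
          rw [this]
          exact min_le_right _ _
    rw [e1, e2]
    exact muRep_add μ S (ih (fun m hm => h m (by omega))) (h (n + 1) (by omega))

lemma mu_pow_eq_zero (μ : Polynomial K → WithTop Γ)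
    (hmul : ∀ f g : Polynomial K, μ (f * g) = μ f + μ g) (hone : μ 1 = 0)
    {q : Polynomial K} (hq : μ q = 0) (m : ℕ) : μ (q ^ m) = 0 := by
  induction m with
  | zero => simpa using hone
  | succ m ih => rw [pow_succ, hmul, ih, hq, add_zero]

end RepAux
/-!
STATEMENT 3: if `S` is a complete set for `μ` with `μ(q) = 0` for all `q ∈ S`,
then every `f` with `μ(f) ≥ 0` is an `𝒪_K`-linear combination of monomials
`S^λ` (finite products of elements of `S`), with `μ(f) = min_i v(a_i)`.
-/
theorem exists_OK_combination {K Γ : Type*} [Field K]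
    [AddCommGroup Γ] [LinearOrder Γ] [IsOrderedAddMonoid Γ]
    (μ : Polynomial K → WithTop Γ)
    (hmul : ∀ f g : Polynomial K, μ (f * g) = μ f + μ g)
    (hadd : ∀ f g : Polynomial K, min (μ f) (μ g) ≤ μ (f + g))
    (hone : μ 1 = 0)
    (S : Set (Polynomial K)) (hS : CompleteSet μ S)
    (hS0 : ∀ q ∈ S, μ q = 0)
    (f : Polynomial K) (hf : 0 ≤ μ f) :
    ∃ (s : ℕ) (a : Fin (s + 1) → K) (lam : Fin (s + 1) → (Polynomial K →₀ ℕ)),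
      (∀ j, ↑(lam j).support ⊆ S) ∧
      -- the coefficients lie in the valuation ring `𝒪_K`:
      (∀ j, 0 ≤ μ (Polynomial.C (a j))) ∧
      f = ∑ j : Fin (s + 1),
            Polynomial.C (a j) * (lam j).prod (fun q k => q ^ k) ∧
      μ f = Finset.univ.inf' Finset.univ_nonempty
              (fun j : Fin (s + 1) => μ (Polynomial.C (a j))) := by
  suffices h : ∀ n : ℕ, ∀ f : Polynomial K, f.natDegree ≤ n → 0 ≤ μ f → MuRep μ S f (μ f) by
    exact h f.natDegree f le_rfl hf
  clear hf f
  intro n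
  induction n using Nat.strong_induction_on with
  | _ n ih =>
    intro f hdeg hf0
    by_cases hd : 1 ≤ f.degree
    · obtain ⟨q, hqS, hqdeg, n', c, hcdeg, hfsum, hfmin⟩ := hS.2 f hd
      have hq0 : μ q = 0 := hS0 q hqS
      have hmu : ∀ m, μ (c m * q ^ m) = μ (c m) := fun m => by
        rw [hmul, mu_pow_eq_zero μ hmul hone hq0, add_zero]
      have hfnat : 0 < f.natDegree := by
        rw [Polynomial.natDegree_pos_iff_degree_pos]
        exact lt_of_lt_of_le zero_lt_one hd
      have hge : ∀ m, m < n' + 1 → 0 ≤ μ (c m) := by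
        intro m hm
        rw [← hmu m]
        refine le_trans hf0 ?_
        rw [hfmin]
        exact Finset.inf'_le _ (Finset.mem_range.mpr hm)
      have hlt : ∀ m, (c m).natDegree < n := by
        intro m
        have h2 : (c m).natDegree < f.natDegree := by
          by_cases hc : c m = 0
          · rw [hc]; simpa using hfnat
          · exact Polynomial.natDegree_lt_natDegree hc
              (lt_of_lt_of_le (hcdeg m) hqdeg)
        omega
      have hrep : ∀ m, m < n' + 1 → MuRep μ S (c m * q ^ m) (μ (c m * q ^ m)) := by
        intro m hm
        rw [hmu m]
        exact muRep_mul_pow μ S (ih _ (hlt m) (c m) le_rfl (hge m hm)) hqS m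
      have := muRep_sum μ S n' (fun m => c m * q ^ m) (fun m => μ (c m * q ^ m)) hrep
      rwa [← hfsum, ← hfmin] at this
    · have hd0 : f.degree ≤ 0 := Nat.WithBot.lt_one_iff_le_zero.mp (not_le.mp hd)
      have hfC : f = Polynomial.C (f.coeff 0) := Polynomial.eq_C_of_degree_le_zero hd0
      rw [hfC]
      exact muRep_C μ S _ (by rwa [← hfC])
end

section
/- Let Γ be an ordered abelian group and Δ a subgroup of Γ of finite index such that ε := |{γ ∈ Γ : 0 ≤ γ < Δ_{>0}}| equals [Γ : Δ]. Then there exist γ_1, ..., γ_ε ∈ Γ such that Γ = ⋃_{i=1}^ε (γ_i + Δ) and 0 = γ_1 < γ_2 < ... < γ_ε < Δ_{>0}. -/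
/-!
STATEMENT 5 (Proposition 3.4 of [Nov12]): if `Δ` is a subgroup of finite index of
an ordered abelian group `Γ` and `ε(Γ|Δ) = |{γ : 0 ≤ γ < Δ_{>0}}|` equals `[Γ:Δ]`,
then there are representatives `0 = γ₁ < γ₂ < … < γ_ε < Δ_{>0}` of the cosets of `Δ`.
-/
theorem coset_representatives_below_positive_part
    {Γ : Type*} [AddCommGroup Γ] [LinearOrder Γ] [IsOrderedAddMonoid Γ] (Δ : AddSubgroup Γ)
    (ε : ℕ) (hε : 0 < ε)
    (hindex : Nat.card (Γ ⧸ Δ) = ε)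
    (hcount : Nat.card {γ : Γ // 0 ≤ γ ∧ ∀ δ ∈ Δ, 0 < δ → γ < δ} = ε) :
    ∃ γs : Fin ε → Γ, StrictMono γs ∧ γs ⟨0, hε⟩ = 0 ∧
      (∀ i, 0 ≤ γs i ∧ ∀ δ ∈ Δ, 0 < δ → γs i < δ) ∧
      (∀ γ : Γ, ∃ i, γ - γs i ∈ Δ) := by
  set T := {γ : Γ // 0 ≤ γ ∧ ∀ δ ∈ Δ, 0 < δ → γ < δ} with hT
  have hfin : Finite T := Nat.finite_of_card_ne_zero (by omega)
  have hfinQ : Finite (Γ ⧸ Δ) := Nat.finite_of_card_ne_zero (by omega)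
  have : Fintype T := Fintype.ofFinite T
  have hcard : Fintype.card T = ε := by rwa [← Nat.card_eq_fintype_card]
  have key : ∀ t u : T, (t : Γ) - u ∈ Δ → t = u := by
    have aux : ∀ t u : T, (u : Γ) ≤ t → (t : Γ) - u ∈ Δ → t = u := by
      intro t u hle hmem
      rcases eq_or_lt_of_le (sub_nonneg.mpr hle) with h | h
      · exact Subtype.ext (sub_eq_zero.mp h.symm)
      · have h1 : (t : Γ) < (t : Γ) - u := t.2.2 _ hmem h
        have h2 : (u : Γ) < 0 := add_lt_iff_neg_left.mp (lt_sub_iff_add_lt.mp h1)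
        exact absurd u.2.1 (not_le.mpr h2)
    intro t u hmem
    rcases le_total (u : Γ) (t : Γ) with h | h
    · exact aux t u h hmem
    · exact (aux u t h (by simpa using Δ.neg_mem hmem)).symm
  have hinj : Function.Injective (fun t : T => (QuotientAddGroup.mk (t : Γ) : Γ ⧸ Δ)) := by
    intro t u h
    exact key t u ((QuotientAddGroup.eq_iff_sub_mem).mp h)
  have hbij : Function.Bijective (fun t : T => (QuotientAddGroup.mk (t : Γ) : Γ ⧸ Δ)) := by
    rw [Nat.bijective_iff_injective_and_card]
    exact ⟨hinj, by rw [hcount, hindex]⟩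
  let e : Fin ε ≃o T := monoEquivOfFin T hcard
  refine ⟨fun i => (e i : Γ), ?_, ?_, fun i => (e i).2, ?_⟩
  · intro i j hij
    exact_mod_cast e.strictMono hij
  · let z : T := ⟨0, le_refl 0, fun δ _ h => h⟩
    have h1 : e ⟨0, hε⟩ ≤ z := by
      have : (⟨0, hε⟩ : Fin ε) ≤ e.symm z := Fin.mk_le_of_le_val (Nat.zero_le _)
      simpa using e.monotone this
    have h2 : z ≤ e ⟨0, hε⟩ := Subtype.coe_le_coe.mp (e ⟨0, hε⟩).2.1
    have heq : e ⟨0, hε⟩ = z := le_antisymm h1 h2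
    show ((e ⟨0, hε⟩ : T) : Γ) = 0
    rw [heq]
  · intro γ
    obtain ⟨t, ht⟩ := hbij.2 (QuotientAddGroup.mk γ)
    refine ⟨e.symm t, ?_⟩
    have hq : (QuotientAddGroup.mk γ : Γ ⧸ Δ) = QuotientAddGroup.mk ((e (e.symm t) : Γ)) := by
      rw [e.apply_symm_apply]; exact ht.symm
    exact (QuotientAddGroup.eq_iff_sub_mem).mp hq
end

section
/- Let Γ be a linearly ordered abelian group and Λ ⊆ Γ a final segment (upward-closed subset) without a least element. Let Δ be the largest isolated (convex) subgroup of Γ for which Λ - Δ = Λ. Then for every ε ∈ Γ with ε > δ for all δ ∈ Δ, there exists λ_0 ∈ Λ such that λ_0 - λ < ε for every λ ∈ Λ. Moreover, if Λ' ⊆ Λ is coinitial in Λ, then λ_0 can be chosen in Λ'. -/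
/-!
STATEMENT 6: let `Λ` be a final segment of `Γ` without least element and `Δ` the
largest isolated (convex) subgroup with `Λ - Δ = Λ`. Then for every `ε > Δ` there
is `l₀ ∈ Λ` with `l₀ - λ < ε` for all `λ ∈ Λ`; moreover `l₀` may be chosen in any
coinitial subset `Λ'` of `Λ`.
-/
theorem final_segment_bounded_oscillation
    {Γ : Type*} [AddCommGroup Γ] [LinearOrder Γ] [IsOrderedAddMonoid Γ] (Λ : Set Γ)
    (hfinal : ∀ ⦃x y : Γ⦄, x ∈ Λ → x ≤ y → y ∈ Λ)
    (hnomin : ∀ x ∈ Λ, ∃ y ∈ Λ, y < x)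
    (Δ : AddSubgroup Γ)
    (hconv : ∀ γ δ : Γ, δ ∈ Δ → 0 ≤ γ → γ ≤ δ → γ ∈ Δ)
    (hΔ : ∀ l ∈ Λ, ∀ d ∈ Δ, ∃ l' ∈ Λ, l' ≤ l - d)
    (hmax : ∀ Δ' : AddSubgroup Γ,
      (∀ γ δ : Γ, δ ∈ Δ' → 0 ≤ γ → γ ≤ δ → γ ∈ Δ') →
      (∀ l ∈ Λ, ∀ d ∈ Δ', ∃ l' ∈ Λ, l' ≤ l - d) → Δ' ≤ Δ)
    (ε : Γ) (hε : ∀ δ ∈ Δ, δ < ε) :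
    (∃ l₀ ∈ Λ, ∀ l ∈ Λ, l₀ - l < ε) ∧
    (∀ Λ' : Set Γ, Λ' ⊆ Λ → (∀ l ∈ Λ, ∃ l' ∈ Λ', l' ≤ l) →
      ∃ l₀ ∈ Λ', ∀ l ∈ Λ, l₀ - l < ε) := by
  have hε0 : 0 < ε := hε 0 Δ.zero_mem
  have main : ∃ l₀ ∈ Λ, ∀ l ∈ Λ, l₀ - l < ε := by
    by_contra h
    push_neg at h
    have hεD : ∀ l ∈ Λ, l - ε ∈ Λ := by
      intro l hl
      obtain ⟨l', hl', hle⟩ := h l hl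
      exact hfinal hl' (le_sub_comm.mp hle)
    set D : AddSubgroup Γ :=
      { carrier := {γ | ∀ l ∈ Λ, l - |γ| ∈ Λ}
        zero_mem' := by
          intro l hl
          simpa using hl
        add_mem' := by
          intro a b ha hb l hl
          have h1 : l - |a| - |b| ∈ Λ := hb _ (ha l hl)
          exact hfinal h1 (by rw [sub_sub]; exact sub_le_sub_left (abs_add_le a b) l)
        neg_mem' := by
          intro a ha l hl
          simpa [abs_neg] using ha l hl } with hD
    have hDconv : ∀ γ δ : Γ, δ ∈ D → 0 ≤ γ → γ ≤ δ → γ ∈ D := by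
      intro γ δ hδ hγ0 hγδ l hl
      have hδ0 : 0 ≤ δ := le_trans hγ0 hγδ
      have h1 : l - |δ| ∈ Λ := hδ l hl
      exact hfinal h1 (by rw [abs_of_nonneg hδ0, abs_of_nonneg hγ0]; exact sub_le_sub_left hγδ l)
    have hDseg : ∀ l ∈ Λ, ∀ d ∈ D, ∃ l' ∈ Λ, l' ≤ l - d := by
      intro l hl d hd
      exact ⟨l - |d|, hd l hl, sub_le_sub_left (le_abs_self d) l⟩
    have hεmem : ε ∈ D := by
      intro l hl
      simpa [abs_of_pos hε0] using hεD l hl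
    exact absurd (hε ε (hmax D hDconv hDseg hεmem)) (lt_irrefl ε)
  refine ⟨main, ?_⟩
  intro Λ' hsub hcoin
  obtain ⟨l₀, hl₀, hbdd⟩ := main
  obtain ⟨l₀', hl₀', hle⟩ := hcoin l₀ hl₀
  exact ⟨l₀', hl₀', fun l hl => lt_of_le_of_lt (sub_le_sub_right hle l) (hbdd l hl)⟩
end

section
/- In the setting of a complete sequence of key polynomials {Q_i}_{i∈I} for a valuation ν on K[x] with support (g), for every f ∈ K[x] and every i ∈ I there exists i' ∈ I with i' ≤ i such that ν_i(f') − ν_i(f) ≥ α_{i'}, where α_{i'} = ν(Q_{i'}') − ν(Q_{i'}) and ν_i is the truncation of ν at Q_i. -/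
open Polynomial

variable {K L Γ : Type*} [Field K] [Field L] [AddCommGroup Γ] [LinearOrder Γ] [IsOrderedAddMonoid Γ]

section KeyPolynomials

variable {K A Γ : Type*} [Field K] [Field A] [AddCommGroup Γ] [LinearOrder Γ] [IsOrderedAddMonoid Γ]

/-- `γ = ε(f) = max{ ν̄(x - a) : a a root of f }`, computed in a valued
algebraically closed field `A` with distinguished point `θ` (the image of `η`). -/
def IsEps [Algebra K A] (wA : AddVal A Γ) (θ : A) (f : Polynomial K)
    (γ : WithTop Γ) : Prop :=
  (∃ b : A, Polynomial.aeval b f = 0 ∧ γ = wA.v (θ - b)) ∧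
  ∀ b : A, Polynomial.aeval b f = 0 → wA.v (θ - b) ≤ γ

/-- `Q` is a key polynomial: `Q` is monic and `ε(f) < ε(Q)` for every `f` of
degree strictly smaller than `deg Q`. -/
def IsKeyPoly [Algebra K A] (wA : AddVal A Γ) (θ : A) (Q : Polynomial K) : Prop :=
  Q.Monic ∧ ∀ f : Polynomial K, 0 < f.degree → f.degree < Q.degree →
    ∀ γf γQ : WithTop Γ, IsEps wA θ f γf → IsEps wA θ Q γQ → γf < γQ

/-- `f` is `q`-monic: the leading coefficient of the `q`-expansion of `f` is `1`. -/
def QMonic (q f : Polynomial K) : Prop :=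
  ∃ (n : ℕ) (c : ℕ → Polynomial K), (∀ m, (c m).degree < q.degree) ∧
    (f = ∑ m ∈ Finset.range (n + 1), c m * q ^ m) ∧ c n = 1

end KeyPolynomials


section MyHelpers

namespace AddVal

variable {L Γ : Type*} [Field L] [AddCommGroup Γ] [LinearOrder Γ] [IsOrderedAddMonoid Γ]

lemma v_zero (w : AddVal L Γ) : w.v 0 = ⊤ := (w.top_iff 0).mpr rfl

lemma v_add_eq_right (w : AddVal L Γ) {x y : L} (h : w.v y < w.v x) :
    w.v (x + y) = w.v y := by
  refine le_antisymm ?_ ?_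
  · have h2 : min (w.v (x + y)) (w.v (-x)) ≤ w.v ((x + y) + (-x)) := w.map_add _ _
    rw [w.map_neg] at h2
    have h3 : (x + y) + (-x) = y := by ring
    rw [h3] at h2
    rcases min_le_iff.mp h2 with h4 | h4
    · exact h4
    · exact absurd h4 (not_le.mpr h)
  · have h5 := w.map_add x y
    rwa [min_eq_right h.le] at h5

lemma v_natCast_nonneg (w : AddVal L Γ) (k : ℕ) : (0 : WithTop Γ) ≤ w.v ((k : ℕ) : L) := by
  induction k with
  | zero => rw [Nat.cast_zero, w.v_zero]; exact le_top
  | succ k ih =>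
    have h2 := w.map_add (k : L) 1
    push_cast
    exact le_trans (le_min ih (le_of_eq w.map_one.symm)) h2

lemma le_v_sum (w : AddVal L Γ) {ι : Type*} {s : Finset ι} {g : ι → L} {γ : WithTop Γ}
    (h : ∀ m ∈ s, γ ≤ w.v (g m)) : γ ≤ w.v (∑ m ∈ s, g m) := by
  classical
  induction s using Finset.cons_induction with
  | empty => rw [Finset.sum_empty, w.v_zero]; exact le_top
  | cons a s ha ih =>
    rw [Finset.sum_cons]
    exact le_trans (le_min (h a (Finset.mem_cons_self a s))
      (ih fun m hm => h m (Finset.mem_cons_of_mem hm))) (w.map_add _ _)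

lemma v_multiset_prod (w : AddVal L Γ) (s : Multiset L) :
    w.v s.prod = (s.map w.v).sum := by
  induction s using Multiset.induction with
  | empty => simpa using w.map_one
  | cons a s ih => simp [w.map_mul, ih]

end AddVal

section PolyHelpers

variable {K Γ : Type*} [Field K] [AddCommGroup Γ] [LinearOrder Γ] [IsOrderedAddMonoid Γ]

open Polynomial in
lemma expansion_coeff_eq_zero {q : Polynomial K} (hq : 1 ≤ q.degree) :
    ∀ (N : ℕ) (e : ℕ → Polynomial K), (∀ m, (e m).degree < q.degree) →
      (∑ m ∈ Finset.range N, e m * q ^ m) = 0 → ∀ m < N, e m = 0 := by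
  have hq0 : q ≠ 0 := by
    rintro rfl; rw [degree_zero] at hq; exact absurd hq (by decide)
  have hnd : 1 ≤ q.natDegree := natDegree_pos_iff_degree_pos.mpr (lt_of_lt_of_le zero_lt_one hq)
  intro N
  induction N with
  | zero => intro e _ _ m hm; exact absurd hm (Nat.not_lt_zero m)
  | succ N ih =>
    intro e he hsum
    have hN : e N = 0 := by
      by_contra heN
      rw [Finset.sum_range_succ] at hsum
      have hSe : e N * q ^ N = -∑ m ∈ Finset.range N, e m * q ^ m :=
        eq_neg_of_add_eq_zero_right hsum
      rcases Nat.eq_zero_or_pos N with hN0 | hN1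
      · subst hN0
        rw [Finset.range_zero, Finset.sum_empty, neg_zero, pow_zero, mul_one] at hSe
        exact heN hSe
      · have hdS : (∑ m ∈ Finset.range N, e m * q ^ m).natDegree ≤ N * q.natDegree - 1 := by
          apply Polynomial.natDegree_sum_le_of_forall_le
          intro m hm
          have hm' : m ≤ N - 1 := by
            have := Finset.mem_range.mp hm; omega
          have h1 : (e m).natDegree ≤ q.natDegree - 1 := by
            by_cases hem : e m = 0
            · rw [hem, natDegree_zero]; omega
            · have := natDegree_lt_natDegree hem (he m); omega
          have h2 : (e m * q ^ m).natDegree ≤ (e m).natDegree + m * q.natDegree := by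
            refine le_trans (natDegree_mul_le) ?_
            rw [natDegree_pow]
          refine le_trans h2 ?_
          have h3 : m * q.natDegree ≤ (N - 1) * q.natDegree := Nat.mul_le_mul_right _ hm'
          have h4 : (N - 1) * q.natDegree + q.natDegree = N * q.natDegree := by
            cases N with
            | zero => omega
            | succ k => simp [Nat.succ_sub_one, Nat.succ_mul]
          omega
        have hdT : (e N * q ^ N).natDegree = (e N).natDegree + N * q.natDegree := by
          rw [natDegree_mul heN (pow_ne_zero _ hq0), natDegree_pow]
        rw [hSe, natDegree_neg] at hdT
        have h5 : 1 ≤ N * q.natDegree := Nat.one_le_iff_ne_zero.mpr (by positivity)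
        omega
    have hsum' : ∑ m ∈ Finset.range N, e m * q ^ m = 0 := by
      rw [Finset.sum_range_succ, hN, zero_mul, add_zero] at hsum; exact hsum
    intro m hm
    rcases Nat.lt_succ_iff_lt_or_eq.mp hm with h | h
    · exact ih e he hsum' m h
    · rw [h]; exact hN

end PolyHelpers
end MyHelpers

section TruncHelpers
open Polynomial
variable {K Γ : Type*} [Field K] [AddCommGroup Γ] [LinearOrder Γ] [IsOrderedAddMonoid Γ]

lemma inf_pad {μ : Polynomial K → WithTop Γ} (hμ0 : μ 0 = ⊤) (q : Polynomial K)
    (n N : ℕ) (hnN : n + 1 ≤ N) (c : ℕ → Polynomial K) :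
    (Finset.range (n + 1)).inf' Finset.nonempty_range_add_one (fun m => μ (c m * q ^ m)) =
      (Finset.range N).inf' (Finset.nonempty_range_iff.mpr (by omega))
        (fun m => μ ((if m ≤ n then c m else 0) * q ^ m)) := by
  refine le_antisymm ?_ ?_
  · apply Finset.le_inf'
    intro m hm
    by_cases h : m ≤ n
    · rw [if_pos h]
      exact Finset.inf'_le _ (Finset.mem_range_succ_iff.mpr h)
    · rw [if_neg h, zero_mul, hμ0]
      exact le_top
  · apply Finset.le_inf'
    intro m hm
    have h : m ≤ n := Finset.mem_range_succ_iff.mp hm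
    have hmem : m ∈ Finset.range N := Finset.mem_range.mpr (by omega)
    have := Finset.inf'_le (fun m => μ ((if m ≤ n then c m else 0) * q ^ m)) hmem
    rwa [if_pos h] at this

lemma sum_pad (q : Polynomial K) (n N : ℕ) (hnN : n + 1 ≤ N) (c : ℕ → Polynomial K) :
    ∑ m ∈ Finset.range (n + 1), c m * q ^ m =
      ∑ m ∈ Finset.range N, (if m ≤ n then c m else 0) * q ^ m := by
  rw [← Finset.sum_subset (Finset.range_subset_range.mpr hnN)
    (fun x _ hx => by rw [if_neg (fun h => hx (Finset.mem_range_succ_iff.mpr h)), zero_mul])]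
  exact Finset.sum_congr rfl fun m hm => by rw [if_pos (Finset.mem_range_succ_iff.mp hm)]

lemma isTrunc_unique {μ : Polynomial K → WithTop Γ} {q f : Polynomial K} {γ₁ γ₂ : WithTop Γ}
    (hq : 1 ≤ q.degree) (hμ0 : μ 0 = ⊤)
    (h₁ : IsTrunc μ q f γ₁) (h₂ : IsTrunc μ q f γ₂) : γ₁ = γ₂ := by
  obtain ⟨n₁, c₁, hd₁, hs₁, hγ₁⟩ := h₁
  obtain ⟨n₂, c₂, hd₂, hs₂, hγ₂⟩ := h₂
  have hbotq : (⊥ : WithBot ℕ) < q.degree := lt_of_lt_of_le (by decide) hq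
  set N := max n₁ n₂ + 1 with hN
  have hN₁ : n₁ + 1 ≤ N := by omega
  have hN₂ : n₂ + 1 ≤ N := by omega
  have hsum0 : ∑ m ∈ Finset.range N,
      ((if m ≤ n₁ then c₁ m else 0) - (if m ≤ n₂ then c₂ m else 0)) * q ^ m = 0 := by
    have e1 := sum_pad q n₁ N hN₁ c₁
    have e2 := sum_pad q n₂ N hN₂ c₂
    calc ∑ m ∈ Finset.range N,
        ((if m ≤ n₁ then c₁ m else 0) - (if m ≤ n₂ then c₂ m else 0)) * q ^ m
        = ∑ m ∈ Finset.range N, ((if m ≤ n₁ then c₁ m else 0) * q ^ m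
            - (if m ≤ n₂ then c₂ m else 0) * q ^ m) :=
          Finset.sum_congr rfl fun m _ => by ring
      _ = ∑ m ∈ Finset.range N, (if m ≤ n₁ then c₁ m else 0) * q ^ m
            - ∑ m ∈ Finset.range N, (if m ≤ n₂ then c₂ m else 0) * q ^ m := by
          rw [Finset.sum_sub_distrib]
      _ = 0 := by rw [← e1, ← e2, ← hs₁, ← hs₂, sub_self]
  have hdeg : ∀ m, ((if m ≤ n₁ then c₁ m else 0) - (if m ≤ n₂ then c₂ m else 0)).degree
      < q.degree := by
    intro m
    refine lt_of_le_of_lt (degree_sub_le _ _) (max_lt ?_ ?_)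
    · by_cases h : m ≤ n₁
      · simpa [h] using hd₁ m
      · simpa [h, degree_zero] using hbotq
    · by_cases h : m ≤ n₂
      · simpa [h] using hd₂ m
      · simpa [h, degree_zero] using hbotq
  have heq : ∀ m < N, (if m ≤ n₁ then c₁ m else 0) = (if m ≤ n₂ then c₂ m else 0) := by
    intro m hm
    exact sub_eq_zero.mp (expansion_coeff_eq_zero hq N _ hdeg hsum0 m hm)
  rw [hγ₁, hγ₂, inf_pad hμ0 q n₁ N hN₁ c₁, inf_pad hμ0 q n₂ N hN₂ c₂]
  exact Finset.inf'_congr _ rfl fun m hm => by rw [heq m (Finset.mem_range.mp hm)]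

end TruncHelpers

section AlgClosedHelpers
open Polynomial
variable {K A Γ : Type*} [Field K] [Field A] [AddCommGroup Γ] [LinearOrder Γ] [IsOrderedAddMonoid Γ]
variable [Algebra K A] [IsAlgClosed A]

lemma aeval_eq_eval_map (p : Polynomial K) (x : A) :
    (Polynomial.aeval x) p = (p.map (algebraMap K A)).eval x := by
  rw [eval_map, aeval_def]

lemma exists_isEps (wA : AddVal A Γ) (θ : A) {p : Polynomial K} (hp : 0 < p.degree) :
    ∃ γ : WithTop Γ, IsEps wA θ p γ := by
  classical
  have hp0 : p ≠ 0 := fun h => by rw [h, degree_zero] at hp; exact absurd hp (by decide)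
  set P := p.map (algebraMap K A) with hP
  have hP0 : P ≠ 0 := by
    rw [hP, Ne, Polynomial.map_eq_zero]; exact hp0
  have hPdeg : P.degree = p.degree := degree_map_eq_of_injective (algebraMap K A).injective p
  obtain ⟨x0, hx0⟩ := IsAlgClosed.exists_root P (by rw [hPdeg]; exact hp.ne')
  have hxmem : x0 ∈ P.roots.toFinset := by
    rw [Multiset.mem_toFinset, mem_roots hP0]; exact hx0
  obtain ⟨b, hb, hmax⟩ := Finset.exists_max_image P.roots.toFinset
    (fun b => wA.v (θ - b)) ⟨x0, hxmem⟩
  have key : ∀ c : A, (Polynomial.aeval c) p = 0 ↔ c ∈ P.roots.toFinset := by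
    intro c
    rw [Multiset.mem_toFinset, mem_roots hP0, IsRoot.def, ← aeval_eq_eval_map]
  exact ⟨wA.v (θ - b), ⟨b, (key b).mpr hb, rfl⟩, fun c hc => hmax c ((key c).mp hc)⟩

lemma eval_transfer (wA : AddVal A Γ) (θ b' : A) (p : Polynomial K)
    (hclose : ∀ c : A, (Polynomial.aeval c) p = 0 → wA.v (θ - c) < wA.v (θ - b')) :
    wA.v ((Polynomial.aeval b') p) = wA.v ((Polynomial.aeval θ) p) := by
  by_cases hp0 : p = 0
  · rw [hp0, map_zero, map_zero]
  set P := p.map (algebraMap K A) with hP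
  have hP0 : P ≠ 0 := by rw [hP, Ne, Polynomial.map_eq_zero]; exact hp0
  have hsplit : P = C P.leadingCoeff * (P.roots.map fun a => X - C a).prod :=
    (IsAlgClosed.splits P).eq_prod_roots
  have hval : ∀ x : A, wA.v (P.eval x)
      = wA.v P.leadingCoeff + ((P.roots.map fun a => wA.v (x - a)).sum) := by
    intro x
    conv_lhs => rw [hsplit]
    rw [eval_mul, eval_C, wA.map_mul, eval_multiset_prod, wA.v_multiset_prod,
      Multiset.map_map, Multiset.map_map]
    congr 2
    refine Multiset.map_congr rfl fun c _ => ?_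
    simp
  rw [aeval_eq_eval_map, aeval_eq_eval_map, hval, hval]
  congr 1
  refine congrArg _ (Multiset.map_congr rfl fun c hc => ?_)
  have hcr : (Polynomial.aeval c) p = 0 := by
    rw [aeval_eq_eval_map]; exact ((mem_roots hP0).mp hc)
  have hlt := hclose c hcr
  have hsplit2 : b' - c = (b' - θ) + (θ - c) := by ring
  have hx : wA.v (b' - θ) = wA.v (θ - b') := by
    rw [← wA.map_neg (b' - θ)]; congr 1; ring
  rw [hsplit2, wA.v_add_eq_right (by rw [hx]; exact hlt)]

end AlgClosedHelpers

/-!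
STATEMENT 11: for a complete sequence of key polynomials `{Q_i}_{i ∈ I}` for `ν`
(`ν(f) = v(f(η))`, support the minimal polynomial `g` of `η`), for every
`f ∈ K[x]` and every `i ∈ I` there is `i' ≤ i` with
`ν_i(f') - ν_i(f) ≥ α_{i'} = ν(Q_{i'}') - ν(Q_{i'})`, written additively as
`ν(Q_{i'}') + ν_i(f) ≤ ν_i(f') + ν(Q_{i'})`.
-/
theorem trunc_deriv_lower_bound
    {K L A Γ : Type*} [Field K] [Field L] [Field A]
    [AddCommGroup Γ] [LinearOrder Γ] [IsOrderedAddMonoid Γ]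
    [Algebra K L] [Algebra L A] [Algebra K A] [IsScalarTower K L A] [IsAlgClosed A]
    {I : Type*} [LinearOrder I] [WellFoundedLT I] [OrderTop I]
    (w : AddVal L Γ) (wA : AddVal A Γ)
    (hwA : ∀ y : L, wA.v (algebraMap L A y) = w.v y)
    (η : L) (hint : IsIntegral K η) (hgen : Algebra.adjoin K {η} = ⊤)
    -- `e(L/K, v) = 1`:
    (he : ∀ y : L, y ≠ 0 → ∃ c : K, c ≠ 0 ∧ w.v (algebraMap K L c) = w.v y)
    (Q : I → Polynomial K) (hQg : Q ⊤ = minpoly K η)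
    (hkey : ∀ i : I, IsKeyPoly wA (algebraMap L A η) (Q i))
    (hmono : ∀ i j : I, i ≤ j → ∀ γi γj : WithTop Γ,
      IsEps wA (algebraMap L A η) (Q i) γi →
      IsEps wA (algebraMap L A η) (Q j) γj → γi ≤ γj)
    -- `νtr i` is the truncation of `ν` at `Q i`:
    (νtr : I → Polynomial K → WithTop Γ)
    (htr : ∀ (i : I) (f : Polynomial K),
      IsTrunc (fun h => w.v (Polynomial.aeval η h)) (Q i) f (νtr i f))
    -- the sequence is complete for `ν`:
    (hcomp : ∀ f : Polynomial K, 1 ≤ f.degree →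
      ∃ i, (Q i).degree ≤ f.degree ∧ νtr i f = w.v (Polynomial.aeval η f))
    (f : Polynomial K) (i : I) :
    ∃ i' : I, i' ≤ i ∧
      w.v (Polynomial.aeval η (Polynomial.derivative (Q i'))) + νtr i f ≤
        νtr i (Polynomial.derivative f) + w.v (Polynomial.aeval η (Q i')) := by
  classical
  have hdQ1 : ∀ k : I, 1 ≤ (Q k).degree := by
    intro k
    by_contra hcon
    push_neg at hcon
    have h1 : Q k = 1 := ((hkey k).1.degree_le_zero_iff_eq_one).mp
      (Nat.WithBot.lt_one_iff_le_zero.mp hcon)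
    obtain ⟨n, c, hcd, hcs, -⟩ := htr k Polynomial.X
    have hc0 : ∀ m, c m = 0 := by
      intro m
      have h2 := hcd m
      rw [h1, Polynomial.degree_one] at h2
      exact Polynomial.degree_eq_bot.mp (Nat.WithBot.lt_zero_iff.mp h2)
    rw [Finset.sum_congr rfl (fun m _ => by rw [hc0 m, zero_mul] :
      ∀ m ∈ Finset.range (n+1), c m * (Q k)^m = 0), Finset.sum_const_zero] at hcs
    exact Polynomial.X_ne_zero hcs
  have heps : ∀ k : I, ∃ γ, IsEps wA (algebraMap L A η) (Q k) γ :=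
    fun k => exists_isEps wA _ (lt_of_lt_of_le zero_lt_one (hdQ1 k))
  have hdegmono : ∀ k j : I, k ≤ j → (Q k).degree ≤ (Q j).degree := by
    intro k j hkj
    by_contra hlt
    push_neg at hlt
    obtain ⟨γk, hγk⟩ := heps k
    obtain ⟨γj, hγj⟩ := heps j
    exact absurd (hmono k j hkj γk γj hγk hγj)
      (not_le.mpr ((hkey k).2 (Q j) (lt_of_lt_of_le zero_lt_one (hdQ1 j)) hlt γj γk hγj hγk))
  have htle : ∀ (k : I) (p : Polynomial K), νtr k p ≤ w.v ((Polynomial.aeval η) p) := by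
    intro k p
    obtain ⟨n, c, hcd, hcs, hcv⟩ := htr k p
    rw [hcv, hcs, map_sum]
    exact w.le_v_sum fun m hm => Finset.inf'_le _ hm
  have hmul : ∀ p q' : Polynomial K, w.v ((Polynomial.aeval η) (p * q'))
      = w.v ((Polynomial.aeval η) p) + w.v ((Polynomial.aeval η) q') := by
    intro p q'; rw [map_mul]; exact w.map_mul _ _
  revert f
  induction i using WellFoundedLT.induction with
  | _ i IH =>
  intro f
  by_cases hQtop : (Polynomial.aeval η) (Q i) = 0
  · exact ⟨i, le_refl i, by rw [hQtop, w.v_zero, add_top]; exact le_top⟩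
  have hQmonic : (Q i).Monic := (hkey i).1
  have hQ0 : Q i ≠ 0 := hQmonic.ne_zero
  have hQd := hdQ1 i
  have hndQ : 1 ≤ (Q i).natDegree :=
    Polynomial.natDegree_pos_iff_degree_pos.mpr (lt_of_lt_of_le zero_lt_one hQd)
  have hbotQ : (⊥ : WithBot ℕ) < (Q i).degree := lt_of_lt_of_le (by decide) hQd
  obtain ⟨γQ, hγQ⟩ := heps i
  obtain ⟨bstar, hbroot, hbval⟩ := hγQ.1
  have htrans : ∀ p : Polynomial K,
      wA.v ((Polynomial.aeval (algebraMap L A η)) p) = w.v ((Polynomial.aeval η) p) := by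
    intro p; rw [Polynomial.aeval_algebraMap_apply, hwA]
  have hclose : ∀ p : Polynomial K, p ≠ 0 → p.degree < (Q i).degree →
      ∀ cA : A, (Polynomial.aeval cA) p = 0 →
        wA.v ((algebraMap L A η) - cA) < wA.v ((algebraMap L A η) - bstar) := by
    intro p hp0 hdeg cA hc
    rcases lt_or_ge 0 p.degree with hpos | hle
    · obtain ⟨γ', hγ'⟩ := exists_isEps wA (algebraMap L A η) hpos
      have hlt := (hkey i).2 p hpos hdeg γ' γQ hγ' hγQ
      rw [hbval] at hlt
      exact lt_of_le_of_lt (hγ'.2 cA hc) hlt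
    · exfalso
      rw [Polynomial.eq_C_of_degree_le_zero hle, Polynomial.aeval_C] at hc
      have h0 : p.coeff 0 = 0 := (algebraMap K A).injective (by rw [hc, map_zero])
      exact hp0 (by rw [Polynomial.eq_C_of_degree_le_zero hle, h0, Polynomial.C_0])
  have hE : ∀ p : Polynomial K,
      (∀ cA : A, (Polynomial.aeval cA) p = 0 →
        wA.v ((algebraMap L A η) - cA) < wA.v ((algebraMap L A η) - bstar)) →
      wA.v ((Polynomial.aeval bstar) p) = w.v ((Polynomial.aeval η) p) := by
    intro p hp
    rw [eval_transfer wA (algebraMap L A η) bstar p hp, htrans]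
  obtain ⟨n, c0, hc0deg, hc0sum, hc0val⟩ := htr i f
  obtain ⟨cc, hcc⟩ : ∃ cc : ℕ → Polynomial K, ∀ m, cc m = if m ≤ n then c0 m else 0 :=
    ⟨_, fun m => rfl⟩
  have hccn : ∀ m, m ≤ n → cc m = c0 m := fun m h => by rw [hcc m, if_pos h]
  have hcc0 : ∀ m, n < m → cc m = 0 := fun m h => by rw [hcc m, if_neg (by omega)]
  have hccdeg : ∀ m, (cc m).degree < (Q i).degree := by
    intro m
    by_cases h : m ≤ n
    · rw [hccn m h]; exact hc0deg m
    · rw [hcc0 m (by omega), Polynomial.degree_zero]; exact hbotQ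
  obtain ⟨e, heDef⟩ : ∃ e : ℕ → Polynomial K,
      ∀ m, e m = (cc m * Polynomial.derivative (Q i)) /ₘ (Q i) := ⟨_, fun m => rfl⟩
  obtain ⟨r, hrDef⟩ : ∃ r : ℕ → Polynomial K,
      ∀ m, r m = (cc m * Polynomial.derivative (Q i)) %ₘ (Q i) := ⟨_, fun m => rfl⟩
  have hdiv : ∀ m, cc m * Polynomial.derivative (Q i) = r m + (Q i) * e m := by
    intro m; rw [heDef m, hrDef m]; exact (Polynomial.modByMonic_add_div _ (Q i)).symm
  have hrdeg : ∀ m, (r m).degree < (Q i).degree := fun m => by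
    rw [hrDef m]; exact Polynomial.degree_modByMonic_lt _ hQmonic
  have hedeg : ∀ m, (e m).degree < (Q i).degree := by
    intro m
    by_cases he0 : e m = 0
    · rw [he0, Polynomial.degree_zero]; exact hbotQ
    · have h1 : (e m).natDegree = (cc m * Polynomial.derivative (Q i)).natDegree - (Q i).natDegree := by
        rw [heDef m]; exact Polynomial.natDegree_divByMonic _ hQmonic
      have h2 : (cc m).natDegree ≤ (Q i).natDegree - 1 := by
        by_cases hc00 : cc m = 0
        · rw [hc00, Polynomial.natDegree_zero]; omega
        · have := Polynomial.natDegree_lt_natDegree hc00 (hccdeg m); omega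
      have h3 : (Polynomial.derivative (Q i)).natDegree ≤ (Q i).natDegree - 1 :=
        Polynomial.natDegree_derivative_le _
      have h4 : (cc m * Polynomial.derivative (Q i)).natDegree
          ≤ (cc m).natDegree + (Polynomial.derivative (Q i)).natDegree :=
        Polynomial.natDegree_mul_le
      have h5 : (e m).natDegree < (Q i).natDegree := by omega
      rw [Polynomial.degree_eq_natDegree he0, Polynomial.degree_eq_natDegree hQ0]
      exact_mod_cast h5
  obtain ⟨D, hD⟩ : ∃ D : ℕ → Polynomial K, ∀ m, D m = Polynomial.derivative (cc m)
      + ((m : ℕ) : Polynomial K) * e m + (((m+1 : ℕ)) : Polynomial K) * r (m+1) :=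
    ⟨_, fun m => rfl⟩
  have hDdeg : ∀ m, (D m).degree < (Q i).degree := by
    intro m
    rw [hD m]
    refine lt_of_le_of_lt (Polynomial.degree_add_le _ _) (max_lt
      (lt_of_le_of_lt (Polynomial.degree_add_le _ _) (max_lt ?_ ?_)) ?_)
    · exact lt_of_le_of_lt Polynomial.degree_derivative_le (hccdeg m)
    · refine lt_of_le_of_lt (Polynomial.degree_mul_le _ _) ?_
      calc (((m : ℕ) : Polynomial K)).degree + (e m).degree
          ≤ 0 + (e m).degree := add_le_add_left (Polynomial.degree_natCast_le m) _
        _ = (e m).degree := zero_add _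
        _ < (Q i).degree := hedeg m
    · refine lt_of_le_of_lt (Polynomial.degree_mul_le _ _) ?_
      calc ((((m+1 : ℕ)) : Polynomial K)).degree + (r (m+1)).degree
          ≤ 0 + (r (m+1)).degree := add_le_add_left (Polynomial.degree_natCast_le (m+1)) _
        _ = (r (m+1)).degree := zero_add _
        _ < (Q i).degree := hrdeg (m+1)
  have hfc : f = ∑ m ∈ Finset.range (n+1), cc m * (Q i)^m := by
    rw [hc0sum]
    exact Finset.sum_congr rfl fun m hm => by
      rw [hccn m (Finset.mem_range_succ_iff.mp hm)]
  have hder1 : Polynomial.derivative f = ∑ m ∈ Finset.range (n+1),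
      (Polynomial.derivative (cc m) * (Q i)^m
        + cc m * (Polynomial.C ((m : ℕ) : K) * (Q i)^(m-1) * Polynomial.derivative (Q i))) := by
    rw [hfc, Polynomial.derivative_sum]
    exact Finset.sum_congr rfl fun m hm => by
      rw [Polynomial.derivative_mul, Polynomial.derivative_pow]
  have hS2 : ∑ m ∈ Finset.range (n+1),
        cc m * (Polynomial.C ((m : ℕ) : K) * (Q i)^(m-1) * Polynomial.derivative (Q i))
      = (∑ m ∈ Finset.range (n+1), ((m : ℕ) : Polynomial K) * e m * (Q i)^m)
        + ∑ m ∈ Finset.range (n+1), (((m+1 : ℕ)) : Polynomial K) * r (m+1) * (Q i)^m := by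
    rw [Finset.sum_range_succ' (fun m =>
      cc m * (Polynomial.C ((m : ℕ) : K) * (Q i)^(m-1) * Polynomial.derivative (Q i))) n]
    have hz : cc 0 * (Polynomial.C ((0 : ℕ) : K) * (Q i)^(0-1) * Polynomial.derivative (Q i))
        = 0 := by simp
    rw [hz, add_zero]
    have hterm : ∀ k,
        cc (k+1) * (Polynomial.C (((k+1 : ℕ)) : K) * (Q i)^((k+1)-1) * Polynomial.derivative (Q i))
        = (((k+1 : ℕ)) : Polynomial K) * r (k+1) * (Q i)^k
          + (((k+1 : ℕ)) : Polynomial K) * e (k+1) * (Q i)^(k+1) := by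
      intro k
      rw [Nat.add_sub_cancel, Polynomial.C_eq_natCast]
      calc cc (k+1) * ((((k+1 : ℕ)) : Polynomial K) * (Q i)^k * Polynomial.derivative (Q i))
          = (((k+1 : ℕ)) : Polynomial K) * ((cc (k+1) * Polynomial.derivative (Q i)) * (Q i)^k) := by
            ring
        _ = (((k+1 : ℕ)) : Polynomial K) * ((r (k+1) + (Q i) * e (k+1)) * (Q i)^k) := by
            rw [hdiv (k+1)]
        _ = (((k+1 : ℕ)) : Polynomial K) * r (k+1) * (Q i)^k
            + (((k+1 : ℕ)) : Polynomial K) * e (k+1) * (Q i)^(k+1) := by ring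
    rw [Finset.sum_congr rfl fun k _ => hterm k, Finset.sum_add_distrib]
    have hA : ∑ k ∈ Finset.range n, (((k+1 : ℕ)) : Polynomial K) * r (k+1) * (Q i)^k
        = ∑ m ∈ Finset.range (n+1), (((m+1 : ℕ)) : Polynomial K) * r (m+1) * (Q i)^m := by
      rw [Finset.sum_range_succ]
      have hr0 : r (n+1) = 0 := by
        rw [hrDef (n+1), hcc0 (n+1) (by omega), zero_mul, Polynomial.zero_modByMonic]
      rw [hr0, mul_zero, zero_mul, add_zero]
    have hB : ∑ k ∈ Finset.range n, (((k+1 : ℕ)) : Polynomial K) * e (k+1) * (Q i)^(k+1)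
        = ∑ m ∈ Finset.range (n+1), ((m : ℕ) : Polynomial K) * e m * (Q i)^m := by
      rw [Finset.sum_range_succ' (fun m => ((m : ℕ) : Polynomial K) * e m * (Q i)^m) n]
      simp
    rw [hA, hB]
    exact add_comm _ _
  have hsum' : Polynomial.derivative f = ∑ m ∈ Finset.range (n+1), D m * (Q i)^m := by
    rw [hder1, Finset.sum_add_distrib, hS2, ← Finset.sum_add_distrib, ← Finset.sum_add_distrib]
    exact Finset.sum_congr rfl fun m hm => by rw [hD m]; ring
  have hWval : νtr i (Polynomial.derivative f)
      = (Finset.range (n+1)).inf' Finset.nonempty_range_add_one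
          (fun m => w.v ((Polynomial.aeval η) (D m * (Q i)^m))) :=
    isTrunc_unique hQd (by show w.v ((Polynomial.aeval η) 0) = ⊤; rw [map_zero]; exact w.v_zero)
      (htr i (Polynomial.derivative f)) ⟨n, D, hDdeg, hsum', rfl⟩
  have hVle : ∀ m, m ≤ n → νtr i f ≤ w.v ((Polynomial.aeval η) (cc m * (Q i)^m)) := by
    intro m hm
    rw [hc0val, hccn m hm]
    exact Finset.inf'_le _ (Finset.mem_range_succ_iff.mpr hm)
  have lemC : ∀ m, w.v ((Polynomial.aeval η) (cc m * Polynomial.derivative (Q i)))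
      ≤ w.v ((Polynomial.aeval η) ((Q i) * e m))
      ∧ w.v ((Polynomial.aeval η) (cc m * Polynomial.derivative (Q i)))
      ≤ w.v ((Polynomial.aeval η) (r m)) := by
    intro m
    by_cases hp0 : cc m * Polynomial.derivative (Q i) = 0
    · have he0 : e m = 0 := by rw [heDef m, hp0, Polynomial.zero_divByMonic]
      have hr0 : r m = 0 := by rw [hrDef m, hp0, Polynomial.zero_modByMonic]
      rw [hp0, he0, hr0, mul_zero, map_zero, w.v_zero]
      exact ⟨le_top, le_top⟩
    have hc0' : cc m ≠ 0 := fun h => hp0 (by rw [h, zero_mul])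
    have hQ'0 : Polynomial.derivative (Q i) ≠ 0 := fun h => hp0 (by rw [h, mul_zero])
    have hclosep : ∀ cA : A, (Polynomial.aeval cA) (cc m * Polynomial.derivative (Q i)) = 0 →
        wA.v ((algebraMap L A η) - cA) < wA.v ((algebraMap L A η) - bstar) := by
      intro cA hcA
      rw [map_mul] at hcA
      rcases mul_eq_zero.mp hcA with h | h
      · exact hclose (cc m) hc0' (hccdeg m) cA h
      · exact hclose _ hQ'0 (Polynomial.degree_derivative_lt hQ0) cA h
    have hxy : (Polynomial.aeval η) (cc m * Polynomial.derivative (Q i))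
        = (Polynomial.aeval η) (r m) + (Polynomial.aeval η) ((Q i) * e m) := by
      rw [hdiv m, map_add]
    by_cases hvav : w.v ((Polynomial.aeval η) ((Q i) * e m)) = w.v ((Polynomial.aeval η) (r m))
    · by_cases hple : w.v ((Polynomial.aeval η) (cc m * Polynomial.derivative (Q i)))
          ≤ w.v ((Polynomial.aeval η) ((Q i) * e m))
      · exact ⟨hple, by rw [← hvav]; exact hple⟩
      · exfalso
        push_neg at hple
        have hyne : (Polynomial.aeval η) (r m) ≠ 0 := by
          intro h0
          rw [hxy, h0, zero_add] at hple
          exact lt_irrefl _ hple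
        have hrm0 : r m ≠ 0 := fun h => hyne (by rw [h, map_zero])
        have hEr := hE (r m) (hclose (r m) hrm0 (hrdeg m))
        have hEp := hE (cc m * Polynomial.derivative (Q i)) hclosep
        have hbp : (Polynomial.aeval bstar) (cc m * Polynomial.derivative (Q i))
            = (Polynomial.aeval bstar) (r m) := by
          rw [hdiv m, map_add, map_mul, hbroot, zero_mul, add_zero]
        have hvp : w.v ((Polynomial.aeval η) (cc m * Polynomial.derivative (Q i)))
            = w.v ((Polynomial.aeval η) (r m)) := by
          rw [← hEp, hbp, hEr]
        rw [hvp, ← hvav] at hple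
        exact lt_irrefl _ hple
    · rcases lt_or_gt_of_ne hvav with hlt | hlt
      · have hmin : w.v ((Polynomial.aeval η) (r m) + (Polynomial.aeval η) ((Q i) * e m))
            = w.v ((Polynomial.aeval η) ((Q i) * e m)) := w.v_add_eq_right hlt
        rw [hxy, hmin]
        exact ⟨le_refl _, hlt.le⟩
      · have hmin : w.v ((Polynomial.aeval η) (r m) + (Polynomial.aeval η) ((Q i) * e m))
            = w.v ((Polynomial.aeval η) (r m)) := by
          rw [add_comm]; exact w.v_add_eq_right hlt
        rw [hxy, hmin]
        exact ⟨hlt.le, le_refl _⟩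
  obtain ⟨m, hmmem, hmeq⟩ := Finset.exists_mem_eq_inf' Finset.nonempty_range_add_one
    (fun m => w.v ((Polynomial.aeval η) (D m * (Q i)^m)))
  have hmn : m ≤ n := Finset.mem_range_succ_iff.mp hmmem
  have hWm : νtr i (Polynomial.derivative f) = w.v ((Polynomial.aeval η) (D m * (Q i)^m)) :=
    hWval.trans hmeq
  have targetA : ∃ i', i' ≤ i ∧ w.v ((Polynomial.aeval η) (Polynomial.derivative (Q i'))) + νtr i f
      ≤ w.v ((Polynomial.aeval η) (Polynomial.derivative (cc m) * (Q i)^m))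
        + w.v ((Polynomial.aeval η) (Q i')) := by
    by_cases hder0 : Polynomial.derivative (cc m) = 0
    · refine ⟨i, le_refl i, ?_⟩
      rw [hder0, zero_mul, map_zero, w.v_zero, top_add]
      exact le_top
    · have hdeg1 : 1 ≤ (cc m).degree := by
        by_contra hcon
        push_neg at hcon
        exact hder0 (by
          rw [Polynomial.eq_C_of_degree_le_zero (Nat.WithBot.lt_one_iff_le_zero.mp hcon)]
          exact Polynomial.derivative_C)
      obtain ⟨j, hjd, hjval⟩ := hcomp (cc m) hdeg1
      have hji : j < i := by
        rcases lt_or_ge j i with h | h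
        · exact h
        · exact absurd (lt_of_le_of_lt (le_trans (hdegmono i j h) hjd) (hccdeg m)) (lt_irrefl _)
      obtain ⟨i', hi'j, hineq⟩ := IH j hji (cc m)
      refine ⟨i', le_of_lt (lt_of_le_of_lt hi'j hji), ?_⟩
      rw [hjval] at hineq
      have h4 : w.v ((Polynomial.aeval η) (Polynomial.derivative (Q i')))
            + w.v ((Polynomial.aeval η) (cc m))
          ≤ w.v ((Polynomial.aeval η) (Polynomial.derivative (cc m)))
            + w.v ((Polynomial.aeval η) (Q i')) :=
        le_trans hineq (add_le_add_left (htle j _) _)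
      calc w.v ((Polynomial.aeval η) (Polynomial.derivative (Q i'))) + νtr i f
          ≤ w.v ((Polynomial.aeval η) (Polynomial.derivative (Q i')))
            + w.v ((Polynomial.aeval η) (cc m * (Q i)^m)) := add_le_add_right (hVle m hmn) _
        _ = (w.v ((Polynomial.aeval η) (Polynomial.derivative (Q i')))
            + w.v ((Polynomial.aeval η) (cc m))) + w.v ((Polynomial.aeval η) ((Q i)^m)) := by
            rw [hmul (cc m) ((Q i)^m), add_assoc]
        _ ≤ (w.v ((Polynomial.aeval η) (Polynomial.derivative (cc m)))
            + w.v ((Polynomial.aeval η) (Q i'))) + w.v ((Polynomial.aeval η) ((Q i)^m)) :=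
            add_le_add_left h4 _
        _ = w.v ((Polynomial.aeval η) (Polynomial.derivative (cc m) * (Q i)^m))
            + w.v ((Polynomial.aeval η) (Q i')) := by
            rw [hmul (Polynomial.derivative (cc m)) ((Q i)^m)]; abel
  have targetB : w.v ((Polynomial.aeval η) (Polynomial.derivative (Q i))) + νtr i f
      ≤ w.v ((Polynomial.aeval η) (((m : ℕ) : Polynomial K) * e m * (Q i)^m))
        + w.v ((Polynomial.aeval η) (Q i)) := by
    have h0 : (0 : WithTop Γ) ≤ w.v ((Polynomial.aeval η) (((m : ℕ) : Polynomial K))) := by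
      rw [map_natCast]; exact w.v_natCast_nonneg m
    calc w.v ((Polynomial.aeval η) (Polynomial.derivative (Q i))) + νtr i f
        ≤ w.v ((Polynomial.aeval η) (Polynomial.derivative (Q i)))
          + w.v ((Polynomial.aeval η) (cc m * (Q i)^m)) := add_le_add_right (hVle m hmn) _
      _ = w.v ((Polynomial.aeval η) (cc m * Polynomial.derivative (Q i)))
          + w.v ((Polynomial.aeval η) ((Q i)^m)) := by
          rw [hmul (cc m) ((Q i)^m), hmul (cc m) (Polynomial.derivative (Q i))]; abel
      _ ≤ w.v ((Polynomial.aeval η) ((Q i) * e m))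
          + w.v ((Polynomial.aeval η) ((Q i)^m)) := add_le_add_left (lemC m).1 _
      _ = 0 + (w.v ((Polynomial.aeval η) ((Q i) * e m))
          + w.v ((Polynomial.aeval η) ((Q i)^m))) := (zero_add _).symm
      _ ≤ w.v ((Polynomial.aeval η) (((m : ℕ) : Polynomial K)))
          + (w.v ((Polynomial.aeval η) ((Q i) * e m))
          + w.v ((Polynomial.aeval η) ((Q i)^m))) := add_le_add_left h0 _
      _ = w.v ((Polynomial.aeval η) (((m : ℕ) : Polynomial K) * e m * (Q i)^m))
          + w.v ((Polynomial.aeval η) (Q i)) := by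
          rw [hmul (((m : ℕ) : Polynomial K) * e m) ((Q i)^m),
            hmul (((m : ℕ) : Polynomial K)) (e m), hmul (Q i) (e m)]
          abel
  have targetC : w.v ((Polynomial.aeval η) (Polynomial.derivative (Q i))) + νtr i f
      ≤ w.v ((Polynomial.aeval η) ((((m+1 : ℕ)) : Polynomial K) * r (m+1) * (Q i)^m))
        + w.v ((Polynomial.aeval η) (Q i)) := by
    rcases lt_or_ge m n with hmlt | hge
    · have h0 : (0 : WithTop Γ) ≤ w.v ((Polynomial.aeval η) ((((m+1 : ℕ)) : Polynomial K))) := by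
        rw [map_natCast]; exact w.v_natCast_nonneg (m+1)
      calc w.v ((Polynomial.aeval η) (Polynomial.derivative (Q i))) + νtr i f
          ≤ w.v ((Polynomial.aeval η) (Polynomial.derivative (Q i)))
            + w.v ((Polynomial.aeval η) (cc (m+1) * (Q i)^(m+1))) :=
            add_le_add_right (hVle (m+1) (by omega)) _
        _ = w.v ((Polynomial.aeval η) (cc (m+1) * Polynomial.derivative (Q i)))
            + w.v ((Polynomial.aeval η) ((Q i)^(m+1))) := by
            rw [hmul (cc (m+1)) ((Q i)^(m+1)), hmul (cc (m+1)) (Polynomial.derivative (Q i))]; abel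
        _ ≤ w.v ((Polynomial.aeval η) (r (m+1)))
            + w.v ((Polynomial.aeval η) ((Q i)^(m+1))) := add_le_add_left (lemC (m+1)).2 _
        _ = 0 + (w.v ((Polynomial.aeval η) (r (m+1)))
            + w.v ((Polynomial.aeval η) ((Q i)^(m+1)))) := (zero_add _).symm
        _ ≤ w.v ((Polynomial.aeval η) ((((m+1 : ℕ)) : Polynomial K)))
            + (w.v ((Polynomial.aeval η) (r (m+1)))
            + w.v ((Polynomial.aeval η) ((Q i)^(m+1)))) := add_le_add_left h0 _
        _ = w.v ((Polynomial.aeval η) ((((m+1 : ℕ)) : Polynomial K) * r (m+1) * (Q i)^m))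
            + w.v ((Polynomial.aeval η) (Q i)) := by
            rw [hmul ((((m+1 : ℕ)) : Polynomial K) * r (m+1)) ((Q i)^m),
              hmul ((((m+1 : ℕ)) : Polynomial K)) (r (m+1)),
              pow_succ, hmul ((Q i)^m) (Q i)]
            abel
    · have hmeqn : m = n := by omega
      have hr0 : r (m+1) = 0 := by
        rw [hrDef (m+1), hcc0 (m+1) (by omega), zero_mul, Polynomial.zero_modByMonic]
      rw [hr0, mul_zero, zero_mul, map_zero, w.v_zero, top_add]
      exact le_top
  have hmin3 : min (min (w.v ((Polynomial.aeval η) (Polynomial.derivative (cc m) * (Q i)^m)))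
        (w.v ((Polynomial.aeval η) (((m : ℕ) : Polynomial K) * e m * (Q i)^m))))
        (w.v ((Polynomial.aeval η) ((((m+1 : ℕ)) : Polynomial K) * r (m+1) * (Q i)^m)))
      ≤ w.v ((Polynomial.aeval η) (D m * (Q i)^m)) := by
    have hsplit3 : D m * (Q i)^m = (Polynomial.derivative (cc m) * (Q i)^m
        + ((m : ℕ) : Polynomial K) * e m * (Q i)^m)
        + (((m+1 : ℕ)) : Polynomial K) * r (m+1) * (Q i)^m := by rw [hD m]; ring
    rw [hsplit3, map_add, map_add]
    refine le_trans (min_le_min (w.map_add _ _) (le_refl _)) (w.map_add _ _)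
  rw [hWm]
  rcases min_cases (min (w.v ((Polynomial.aeval η) (Polynomial.derivative (cc m) * (Q i)^m)))
      (w.v ((Polynomial.aeval η) (((m : ℕ) : Polynomial K) * e m * (Q i)^m))))
      (w.v ((Polynomial.aeval η) ((((m+1 : ℕ)) : Polynomial K) * r (m+1) * (Q i)^m)))
    with ⟨hm1, _⟩ | ⟨hm1, _⟩
  · rw [hm1] at hmin3
    rcases min_cases (w.v ((Polynomial.aeval η) (Polynomial.derivative (cc m) * (Q i)^m)))
        (w.v ((Polynomial.aeval η) (((m : ℕ) : Polynomial K) * e m * (Q i)^m)))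
      with ⟨hm2, _⟩ | ⟨hm2, _⟩
    · rw [hm2] at hmin3
      obtain ⟨i', hi'le, hi'ineq⟩ := targetA
      exact ⟨i', hi'le, le_trans hi'ineq (add_le_add_left hmin3 _)⟩
    · rw [hm2] at hmin3
      exact ⟨i, le_refl i, le_trans targetB (add_le_add_left hmin3 _)⟩
  · rw [hm1] at hmin3
    exact ⟨i, le_refl i, le_trans targetC (add_le_add_left hmin3 _)⟩
end

section
/- Let (L/K,v) be a Kummer extension of degree p with g = x^p − a, v(a) = 0, residue characteristic p, rk(v) = 1, and {x − a_n}_{n∈ℕ} a cofinal sequence of degree-one key polynomials for the induced valuation ν. Set γ = sup_n ν(x − a_n) (taken in ℝ). Then, with α_n = −ν(x − a_n) and β_n = v(p) − p·ν(x − a_n) for large n, the equality of final segments α = β (equivalently Ω_{O_L/O_K} = 0) holds if and only if γ = v(p)/(p−1). -/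
open Polynomial

variable {K L Γ : Type*} [Field K] [Field L] [AddCommGroup Γ] [LinearOrder Γ] [IsOrderedAddMonoid Γ]

/-!
STATEMENT 18: Kummer defect extensions.  `g = x^p - a` with `v(a) = 0`,
`rk(v) = 1`, `{x - a_n}` a cofinal sequence of degree-one key polynomials with
`ν(x - a_n) = c_n`, `ν(g') = v(p)` and `ν_n(g) = p·c_n` for large `n`, so that
`α_n = -c_n` and `β_n = v(p) - p·c_n`.  With `γ = sup_n c_n`, the equality of
final segments `α = β` (equivalently `Ω_{𝒪_L/𝒪_K} = 0`) holds iff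
`γ = v(p)/(p-1)`.
-/
private lemma addval_ne_zero {L : Type*} [Field L] (w : AddVal L ℝ) {x : L} {r : ℝ}
    (h : w.v x = (r : WithTop ℝ)) : x ≠ 0 := by
  intro hx
  rw [(w.top_iff x).mpr hx] at h
  exact (WithTop.top_ne_coe) h

private lemma addval_inv {L : Type*} [Field L] (w : AddVal L ℝ) {x : L} {r : ℝ}
    (h : w.v x = (r : WithTop ℝ)) : w.v x⁻¹ = ((-r : ℝ) : WithTop ℝ) := by
  have hx : x ≠ 0 := addval_ne_zero w h
  have h1 : w.v (x * x⁻¹) = w.v 1 := by rw [mul_inv_cancel₀ hx]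
  rw [w.map_mul, w.map_one, h] at h1
  cases hv : w.v x⁻¹ with
  | top => rw [hv] at h1; simp at h1
  | coe s =>
    rw [hv, ← WithTop.coe_add] at h1
    have hs : r + s = 0 := by exact_mod_cast h1
    norm_cast
    linarith

private lemma addval_pow {L : Type*} [Field L] (w : AddVal L ℝ) {x : L} {r : ℝ}
    (h : w.v x = (r : WithTop ℝ)) (n : ℕ) :
    w.v (x ^ n) = ((n * r : ℝ) : WithTop ℝ) := by
  induction n with
  | zero => simpa using w.map_one
  | succ k ih =>
    rw [pow_succ, w.map_mul, ih, h, ← WithTop.coe_add]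
    congr 1
    push_cast
    ring

theorem kummer_alpha_eq_beta_iff
    {K L : Type*} [Field K] [Field L] [Algebra K L]
    (p : ℕ) (hp : p.Prime)
    (w : AddVal L ℝ)
    (a : K) (hva : w.v (algebraMap K L a) = 0)
    (hirr : Irreducible (Polynomial.X ^ p - Polynomial.C a))
    (η : L) (hη : Polynomial.aeval η (Polynomial.X ^ p - Polynomial.C a) = 0)
    (hgen : Algebra.adjoin K {η} = ⊤)
    (vp : ℝ) (hvp : 0 < vp)
    -- `ν(g') = v(p)`:
    (hg' : w.v (Polynomial.aeval η
      (Polynomial.derivative (Polynomial.X ^ p - Polynomial.C a))) =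
        (vp : WithTop ℝ))
    (aseq : ℕ → K) (c : ℕ → ℝ)
    (hc : ∀ n, w.v (η - algebraMap K L (aseq n)) = ((c n : ℝ) : WithTop ℝ))
    (hmono : StrictMono c) (hbdd : BddAbove (Set.range c))
    -- the sequence `{x - a_n}` is cofinal among degree-one polynomials:
    (hcofinal : ∀ b : K, ∃ n : ℕ,
      w.v (η - algebraMap K L b) ≤ w.v (η - algebraMap K L (aseq n)))
    (N : ℕ)
    -- for `n ≥ N`, `ν_n(g) = p·ν(x - a_n)`:
    (hβn : ∀ n, N ≤ n →
      IsTrunc (fun f => w.v (Polynomial.aeval η f))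
        (Polynomial.X - Polynomial.C (aseq n))
        (Polynomial.X ^ p - Polynomial.C a)
        (((p : ℝ) * c n : ℝ) : WithTop ℝ)) :
    -- `α = β` as final segments of `vL` …
    ({γ : ℝ | (∃ y : L, y ≠ 0 ∧ w.v y = (γ : WithTop ℝ)) ∧
        ∃ n : ℕ, -(c n) ≤ γ} =
      {γ : ℝ | (∃ y : L, y ≠ 0 ∧ w.v y = (γ : WithTop ℝ)) ∧
        ∃ n : ℕ, N ≤ n ∧ vp - (p : ℝ) * c n ≤ γ}) ↔
    -- … iff `γ = v(p)/(p-1)`: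
    (⨆ n : ℕ, c n) = vp / ((p : ℝ) - 1) := by
  set Γs : ℝ := ⨆ n : ℕ, c n with hΓs
  have hp2 : 2 ≤ p := hp.two_le
  have hpR : (1 : ℝ) < (p : ℝ) := by exact_mod_cast hp.one_lt
  have hpp : (0 : ℝ) < (p : ℝ) := by linarith
  have hcn_lt : ∀ n, c n < Γs := fun n =>
    lt_of_lt_of_le (hmono (Nat.lt_succ_self n)) (le_ciSup hbdd (n + 1))
  -- characterization of the α-condition
  have hA : ∀ γ : ℝ, (∃ n : ℕ, -(c n) ≤ γ) ↔ -Γs < γ := by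
    intro γ
    constructor
    · rintro ⟨n, hn⟩
      have := hcn_lt n
      linarith
    · intro hγ
      have : -γ < Γs := by linarith
      obtain ⟨n, hn⟩ := exists_lt_of_lt_ciSup this
      exact ⟨n, by linarith⟩
  -- characterization of the β-condition
  have hB : ∀ γ : ℝ, (∃ n : ℕ, N ≤ n ∧ vp - (p : ℝ) * c n ≤ γ) ↔ vp - (p : ℝ) * Γs < γ := by
    intro γ
    constructor
    · rintro ⟨n, -, hn⟩
      have := hcn_lt n
      nlinarith
    · intro hγ
      have h1 : (vp - γ) / (p : ℝ) < Γs := by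
        rw [div_lt_iff₀ hpp]; nlinarith
      obtain ⟨n, hn⟩ := exists_lt_of_lt_ciSup h1
      refine ⟨max n N, le_max_right n N, ?_⟩
      have h2 : c n ≤ c (max n N) := hmono.monotone (le_max_left n N)
      have h3 : (vp - γ) / (p : ℝ) < c (max n N) := lt_of_lt_of_le hn h2
      rw [div_lt_iff₀ hpp] at h3
      nlinarith
  -- elements realizing the values `-c n`
  have hAach : ∀ n : ℕ, ∃ y : L, y ≠ 0 ∧ w.v y = ((-(c n) : ℝ) : WithTop ℝ) := by
    intro n
    refine ⟨(η - algebraMap K L (aseq n))⁻¹, ?_, addval_inv w (hc n)⟩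
    exact inv_ne_zero (addval_ne_zero w (hc n))
  -- elements realizing the values `vp - p * c n`
  have hBach : ∀ n : ℕ, ∃ y : L, y ≠ 0 ∧
      w.v y = ((vp - (p : ℝ) * c n : ℝ) : WithTop ℝ) := by
    intro n
    refine ⟨Polynomial.aeval η (Polynomial.derivative (Polynomial.X ^ p - Polynomial.C a)) *
      ((η - algebraMap K L (aseq n))⁻¹) ^ p, ?_, ?_⟩
    · exact mul_ne_zero (addval_ne_zero w hg')
        (pow_ne_zero _ (inv_ne_zero (addval_ne_zero w (hc n))))
    · rw [w.map_mul, hg', addval_pow w (addval_inv w (hc n)) p, ← WithTop.coe_add]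
      congr 1
      ring
  constructor
  · -- sets equal → Γs = vp/(p-1)
    intro hset
    by_contra hne
    have hkey : -Γs ≠ vp - (p : ℝ) * Γs := by
      intro h
      apply hne
      rw [eq_div_iff (by linarith : (p : ℝ) - 1 ≠ 0)]
      nlinarith [h]
    rcases lt_or_gt_of_ne hkey with hlt | hgt
    · -- pick n with `-c n < vp - p Γs`: then `-c n ∈ α \ β`
      have h1 : (p : ℝ) * Γs - vp < Γs := by linarith
      obtain ⟨n, hn⟩ := exists_lt_of_lt_ciSup h1
      have hmem : (-(c n)) ∈ {γ : ℝ | (∃ y : L, y ≠ 0 ∧ w.v y = (γ : WithTop ℝ)) ∧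
          ∃ m : ℕ, -(c m) ≤ γ} := ⟨hAach n, ⟨n, le_refl _⟩⟩
      rw [hset] at hmem
      obtain ⟨-, hm⟩ := hmem
      have := (hB (-(c n))).mp hm
      linarith
    · -- pick n ≥ N with `vp - p c n < -Γs`: then `vp - p c n ∈ β \ α`
      have h1 : (vp + Γs) / (p : ℝ) < Γs := by rw [div_lt_iff₀ hpp]; nlinarith
      obtain ⟨n₀, hn₀⟩ := exists_lt_of_lt_ciSup h1
      set n := max n₀ N with hn
      have h2 : (vp + Γs) / (p : ℝ) < c n :=
        lt_of_lt_of_le hn₀ (hmono.monotone (le_max_left n₀ N))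
      rw [div_lt_iff₀ hpp] at h2
      have hmem : (vp - (p : ℝ) * c n) ∈ {γ : ℝ | (∃ y : L, y ≠ 0 ∧ w.v y = (γ : WithTop ℝ)) ∧
          ∃ m : ℕ, N ≤ m ∧ vp - (p : ℝ) * c m ≤ γ} :=
        ⟨hBach n, ⟨n, le_max_right n₀ N, le_refl _⟩⟩
      rw [← hset] at hmem
      obtain ⟨-, hm⟩ := hmem
      have := (hA (vp - (p : ℝ) * c n)).mp hm
      nlinarith
  · -- Γs = vp/(p-1) → sets equal
    intro heq
    have hthr : -Γs = vp - (p : ℝ) * Γs := by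
      have hne : (p : ℝ) - 1 ≠ 0 := by linarith
      have : Γs * ((p : ℝ) - 1) = vp := by
        rw [heq]; field_simp
      nlinarith [this]
    ext γ
    simp only [Set.mem_setOf_eq]
    constructor
    · rintro ⟨hy, hex⟩
      exact ⟨hy, (hB γ).mpr (hthr ▸ (hA γ).mp hex)⟩
    · rintro ⟨hy, hex⟩
      exact ⟨hy, (hA γ).mpr (hthr ▸ (hB γ).mp hex)⟩
end
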